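/- Let G be a compact topological group equipped with its Haar probability measure dg, acting continuously on a Hausdorff topological space N (that is, the map G × N → N, (g,x) ↦ g·x, is continuous). Let f : N → ℝ be a continuous function that is proper and bounded from below. Then its G-average f̄ : N → ℝ, defined by f̄(x) = ∫_G f(g·x) dg, is bounded from below, and the preimage under f̄ of every compact subset of ℝ is compact. -/

import Mathlib

open MeasureTheory

/-- **Lemma 3.5.** Let `G` be a compact topological group with its Haar probability
measure `μ`, acting continuously on a Hausdorff topological space `N`.  Let `f : N → ℝ`
be a continuous function that is proper and bounded from below.  Then its `G`-average
`x ↦ ∫ g, f (g • x) ∂μ` is bounded from below, and the preimage under it of every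
compact subset of `ℝ` is compact. -/
theorem average_proper_bddBelow
    {G N : Type*} [Group G] [TopologicalSpace G] [IsTopologicalGroup G]
    [CompactSpace G] [MeasurableSpace G] [BorelSpace G]
    (μ : Measure G) [IsProbabilityMeasure μ] [μ.IsHaarMeasure]
    [TopologicalSpace N] [T2Space N] [MulAction G N] [ContinuousSMul G N]
    (f : N → ℝ) (hf : Continuous f)
    (hproper : ∀ K : Set ℝ, IsCompact K → IsCompact (f ⁻¹' K))
    (hbdd : BddBelow (Set.range f)) :
    BddBelow (Set.range fun x => ∫ g, f (g • x) ∂μ) ∧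
      ∀ K : Set ℝ, IsCompact K →
        IsCompact ((fun x => ∫ g, f (g • x) ∂μ) ⁻¹' K) := by
  obtain ⟨c, hc⟩ := hbdd
  have hc' : ∀ y, c ≤ f y := fun y => hc ⟨y, rfl⟩
  have hcont_x : ∀ x : N, Continuous fun g : G => f (g • x) :=
    fun x => hf.comp (continuous_id.smul continuous_const)
  have hint : ∀ x : N, Integrable (fun g : G => f (g • x)) μ := by
    intro x
    exact (hcont_x x).integrable_of_hasCompactSupport
      (HasCompactSupport.of_compactSpace _)
  have hlb : ∀ x : N, c ≤ ∫ g, f (g • x) ∂μ := by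
    intro x
    calc c = ∫ _ : G, c ∂μ := by simp
      _ ≤ ∫ g, f (g • x) ∂μ :=
        integral_mono (integrable_const c) (hint x) fun g => hc' _
  refine ⟨⟨c, fun y ⟨x, hx⟩ => hx ▸ hlb x⟩, ?_⟩
  intro K hK
  obtain ⟨M₀, hM₀⟩ := hK.bddAbove
  set L : Set N := f ⁻¹' Set.Icc c M₀ with hLdef
  have hL : IsCompact L := hproper _ isCompact_Icc
  set C : Set N := (fun p : G × N => p.1 • p.2) '' (Set.univ ×ˢ L) with hCdef
  have hC : IsCompact C := (isCompact_univ.prod hL).image continuous_smul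
  have hsub : (fun x => ∫ g, f (g • x) ∂μ) ⁻¹' K ⊆ C := by
    intro x hx
    have hxM : (∫ g, f (g • x) ∂μ) ≤ M₀ := hM₀ hx
    obtain ⟨g₀, -, hmin⟩ :=
      isCompact_univ.exists_isMinOn ⟨1, trivial⟩ (hcont_x x).continuousOn
    have h1 : f (g₀ • x) ≤ ∫ g, f (g • x) ∂μ := by
      calc f (g₀ • x) = ∫ _ : G, f (g₀ • x) ∂μ := by simp
        _ ≤ ∫ g, f (g • x) ∂μ :=
          integral_mono (integrable_const _) (hint x) fun g => hmin trivial
    have hmem : g₀ • x ∈ L := ⟨hc' _, h1.trans hxM⟩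
    exact ⟨(g₀⁻¹, g₀ • x), ⟨trivial, hmem⟩, inv_smul_smul g₀ x⟩
  -- continuity of the average (everywhere on N, via the tube lemma)
  have hcont : Continuous fun x => ∫ g, f (g • x) ∂μ := by
    rw [continuous_iff_continuousAt]
    intro x
    rw [ContinuousAt, Metric.tendsto_nhds]
    intro ε hε
    have hε2 : (0 : ℝ) < ε / 2 := by linarith
    set n : Set (G × N) := {p | |f (p.1 • p.2) - f (p.1 • x)| < ε / 2} with hn_def
    have hn_open : IsOpen n := by
      have hcont' : Continuous fun p : G × N => |f (p.1 • p.2) - f (p.1 • x)| :=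
        ((hf.comp continuous_smul).sub
          (hf.comp (continuous_fst.smul continuous_const))).abs
      exact isOpen_lt hcont' continuous_const
    have hsubn : Set.univ ×ˢ ({x} : Set N) ⊆ n := by
      rintro ⟨g, y⟩ ⟨-, hy⟩
      simp only [Set.mem_singleton_iff] at hy
      subst hy
      simpa [hn_def] using hε2
    obtain ⟨u, v, hu, hv, hus, hvs, huv⟩ :=
      generalized_tube_lemma isCompact_univ isCompact_singleton hn_open hsubn
    have hxv : x ∈ v := hvs rfl
    filter_upwards [hv.mem_nhds hxv] with x' hx'
    have key : ∀ g : G, ‖f (g • x') - f (g • x)‖ ≤ ε / 2 := by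
      intro g
      have : (g, x') ∈ n := huv ⟨hus trivial, hx'⟩
      simpa [Real.norm_eq_abs] using this.le
    have hnorm :
        ‖∫ g, (f (g • x') - f (g • x)) ∂μ‖ ≤ ε / 2 * (μ Set.univ).toReal :=
      norm_integral_le_of_norm_le_const (Filter.Eventually.of_forall key)
    have heq : (∫ g, f (g • x') ∂μ) - ∫ g, f (g • x) ∂μ
        = ∫ g, (f (g • x') - f (g • x)) ∂μ := (integral_sub (hint x') (hint x)).symm
    rw [Real.dist_eq, heq]
    calc |∫ g, (f (g • x') - f (g • x)) ∂μ| ≤ ε / 2 * (μ Set.univ).toReal := hnorm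
      _ = ε / 2 := by simp
      _ < ε := by linarith
  have hclosed : IsClosed ((fun x => ∫ g, f (g • x) ∂μ) ⁻¹' K) :=
    hK.isClosed.preimage hcont
  exact hC.of_isClosed_subset hclosed hsub
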